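/- Let m be a natural number and suppose ι is a C^{m,γ}-embedding with constant C. Then the delta map δ : ℝⁿ → X* is of class C^m (i.e. ContDiff ℝ m δ, where X* carries the operator norm). -/

import Mathlib

set_option maxHeartbeats 1000000
set_option synthInstance.maxHeartbeats 200000


/-- `ι : X →ₗ[ℝ] ((Fin n → ℝ) → ℝ)` is a `C^{m,γ}`-embedding with constant `C`:
for every `f : X` the function `f̂ = ι f` is `m`-times continuously differentiable,
all iterated derivatives up to order `m` are bounded by `C‖f‖`, and the `m`-th
iterated derivative is `γ`-Hölder with constant `C‖f‖`. -/
def IsCmGammaEmbedding {X : Type*} [NormedAddCommGroup X] [NormedSpace ℝ X]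
    (n : ℕ) (ι : X →ₗ[ℝ] ((Fin n → ℝ) → ℝ)) (m : ℕ) (γ C : ℝ) : Prop :=
  ∀ f : X,
    ContDiff ℝ m (ι f) ∧
    (∀ i : ℕ, i ≤ m → ∀ x : Fin n → ℝ, ‖iteratedFDeriv ℝ i (ι f) x‖ ≤ C * ‖f‖) ∧
    ∀ x y : Fin n → ℝ,
      ‖iteratedFDeriv ℝ m (ι f) x - iteratedFDeriv ℝ m (ι f) y‖ ≤ C * ‖f‖ * ‖x - y‖ ^ γ

section DeltaAux

open Filter Asymptotics Topology Metric

variable {X : Type*} [NormedAddCommGroup X] [NormedSpace ℝ X]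
variable {n : ℕ} {γ C : ℝ} {ι : X →ₗ[ℝ] ((Fin n → ℝ) → ℝ)} {m : ℕ}

lemma deltaL_bound (hC : 0 ≤ C) (hemb : IsCmGammaEmbedding n ι m γ C)
    (i : ℕ) (hi : i ≤ m) (x : Fin n → ℝ) (v : Fin i → (Fin n → ℝ)) (f : X) :
    ‖iteratedFDeriv ℝ i (ι f) x v‖ ≤ (C * ∏ j, ‖v j‖) * ‖f‖ := by
  have h1 := (iteratedFDeriv ℝ i (ι f) x).le_opNorm v
  have h2 := (hemb f).2.1 i hi x
  have h3 : (0:ℝ) ≤ ∏ j, ‖v j‖ := Finset.prod_nonneg fun j _ => norm_nonneg _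
  calc ‖iteratedFDeriv ℝ i (ι f) x v‖
      ≤ ‖iteratedFDeriv ℝ i (ι f) x‖ * ∏ j, ‖v j‖ := h1
    _ ≤ (C * ‖f‖) * ∏ j, ‖v j‖ := mul_le_mul_of_nonneg_right h2 h3
    _ = (C * ∏ j, ‖v j‖) * ‖f‖ := by ring

/-- The candidate `i`-th derivative of the delta map, as a continuous multilinear map with
values in the dual of `X`. -/
noncomputable def deltaP (hC : 0 ≤ C) (hemb : IsCmGammaEmbedding n ι m γ C)
    (i : ℕ) (hi : i ≤ m) (x : Fin n → ℝ) :
    ContinuousMultilinearMap ℝ (fun _ : Fin i => (Fin n → ℝ)) (X →L[ℝ] ℝ) :=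
  MultilinearMap.mkContinuous
    { toFun := fun v => LinearMap.mkContinuous
        { toFun := fun f => iteratedFDeriv ℝ i (ι f) x v
          map_add' := fun f g => by
            have hf : ContDiff ℝ i (ι f) := (hemb f).1.of_le (by exact_mod_cast hi)
            have hg : ContDiff ℝ i (ι g) := (hemb g).1.of_le (by exact_mod_cast hi)
            show iteratedFDeriv ℝ i (ι (f + g)) x v =
              iteratedFDeriv ℝ i (ι f) x v + iteratedFDeriv ℝ i (ι g) x v
            rw [map_add, iteratedFDeriv_add_apply hf.contDiffAt hg.contDiffAt]
            rfl
          map_smul' := fun c f => by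
            have hf : ContDiff ℝ i (ι f) := (hemb f).1.of_le (by exact_mod_cast hi)
            show iteratedFDeriv ℝ i (ι (c • f)) x v = c • iteratedFDeriv ℝ i (ι f) x v
            rw [map_smul, iteratedFDeriv_const_smul_apply hf.contDiffAt]
            rfl }
        (C * ∏ j, ‖v j‖)
        (deltaL_bound hC hemb i hi x v)
      map_update_add' := fun v j a b => by
        ext f
        simp [(iteratedFDeriv ℝ i (ι f) x).map_update_add]
      map_update_smul' := fun v j c a => by
        ext f
        simp [(iteratedFDeriv ℝ i (ι f) x).map_update_smul] }
    C
    (fun v => LinearMap.mkContinuous_norm_le _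
      (mul_nonneg hC (Finset.prod_nonneg fun j _ => norm_nonneg _))
      (deltaL_bound hC hemb i hi x v))

@[simp] lemma deltaP_apply (hC : 0 ≤ C) (hemb : IsCmGammaEmbedding n ι m γ C)
    (i : ℕ) (hi : i ≤ m) (x : Fin n → ℝ) (v : Fin i → (Fin n → ℝ)) (f : X) :
    deltaP hC hemb i hi x v f = iteratedFDeriv ℝ i (ι f) x v := by
  simp [deltaP]

/-- Norm bound for a dual-valued continuous multilinear map from evaluation bounds. -/
lemma deltaP_norm_le_of_forall {i : ℕ}
    (A : ContinuousMultilinearMap ℝ (fun _ : Fin i => (Fin n → ℝ)) (X →L[ℝ] ℝ)) {K : ℝ}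
    (hK : 0 ≤ K) (h : ∀ (v : Fin i → (Fin n → ℝ)) (f : X), ‖A v f‖ ≤ K * ‖f‖ * ∏ j, ‖v j‖) :
    ‖A‖ ≤ K := by
  rw [ContinuousMultilinearMap.opNorm_le_iff hK]
  intro v
  have h3 : (0:ℝ) ≤ ∏ j, ‖v j‖ := Finset.prod_nonneg fun j _ => norm_nonneg _
  refine ContinuousLinearMap.opNorm_le_bound _ (mul_nonneg hK h3) fun f => ?_
  calc ‖A v f‖ ≤ K * ‖f‖ * ∏ j, ‖v j‖ := h v f
    _ = (K * ∏ j, ‖v j‖) * ‖f‖ := by ring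

/-- The difference of `fderiv`s of an iterated derivative is controlled by the difference of
the next iterated derivatives. -/
lemma norm_fderiv_iter_sub (u : (Fin n → ℝ) → ℝ) (j : ℕ) (t x : Fin n → ℝ) :
    ‖fderiv ℝ (iteratedFDeriv ℝ j u) t - fderiv ℝ (iteratedFDeriv ℝ j u) x‖ =
      ‖iteratedFDeriv ℝ (j + 1) u t - iteratedFDeriv ℝ (j + 1) u x‖ := by
  rw [fderiv_iteratedFDeriv]
  simp only [Function.comp_apply]
  rw [← LinearIsometryEquiv.map_sub, LinearIsometryEquiv.norm_map]

/-- Hölder bound on consecutive iterated derivatives (exponent `γ` at top order, Lipschitz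
below top order). -/
lemma iter_succ_sub_bound (hC : 0 ≤ C) (hemb : IsCmGammaEmbedding n ι m γ C)
    (f : X) (i : ℕ) (hi : i + 1 ≤ m) (t x : Fin n → ℝ) :
    ‖iteratedFDeriv ℝ (i + 1) (ι f) t - iteratedFDeriv ℝ (i + 1) (ι f) x‖ ≤
      C * ‖f‖ * ‖t - x‖ ^ (if i + 1 = m then γ else (1:ℝ)) := by
  by_cases h : i + 1 = m
  · rw [if_pos h, h]
    exact (hemb f).2.2 t x
  · rw [if_neg h, Real.rpow_one]
    have h2 : i + 1 + 1 ≤ m := by omega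
    have hg : ContDiff ℝ 1 (iteratedFDeriv ℝ (i + 1) (ι f)) :=
      (hemb f).1.iteratedFDeriv_right (by exact_mod_cast (by omega : 1 + (i + 1) ≤ m))
    refine Convex.norm_image_sub_le_of_norm_fderiv_le
      (fun z _ => hg.differentiable one_ne_zero z)
      (fun z _ => ?_) convex_univ (Set.mem_univ x) (Set.mem_univ t)
    rw [norm_fderiv_iteratedFDeriv]
    exact (hemb f).2.1 (i + 1 + 1) h2 z

/-- Taylor remainder estimate with Hölder gain. -/
lemma iter_remainder_bound (hC : 0 ≤ C) (hemb : IsCmGammaEmbedding n ι m γ C)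
    (hγ : 0 < γ) (f : X) (i : ℕ) (hi : i + 1 ≤ m) (x y : Fin n → ℝ) :
    ‖iteratedFDeriv ℝ i (ι f) y - iteratedFDeriv ℝ i (ι f) x -
        fderiv ℝ (iteratedFDeriv ℝ i (ι f)) x (y - x)‖ ≤
      (C * ‖f‖ * ‖y - x‖ ^ (if i + 1 = m then γ else (1:ℝ))) * ‖y - x‖ := by
  set α : ℝ := if i + 1 = m then γ else (1:ℝ) with hα_def
  have hα : 0 < α := by rw [hα_def]; split <;> [exact hγ; exact one_pos]
  have hg : ContDiff ℝ 1 (iteratedFDeriv ℝ i (ι f)) :=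
    (hemb f).1.iteratedFDeriv_right (by exact_mod_cast (by omega : 1 + i ≤ m))
  refine Convex.norm_image_sub_le_of_norm_hasFDerivWithin_le'
    (s := closedBall x ‖y - x‖)
    (fun t _ => ((hg.differentiable one_ne_zero t).hasFDerivAt).hasFDerivWithinAt)
    (fun t ht => ?_) (convex_closedBall _ _) (mem_closedBall_self (norm_nonneg _)) ?_
  · rw [norm_fderiv_iter_sub]
    calc ‖iteratedFDeriv ℝ (i + 1) (ι f) t - iteratedFDeriv ℝ (i + 1) (ι f) x‖
        ≤ C * ‖f‖ * ‖t - x‖ ^ α := iter_succ_sub_bound hC hemb f i hi t x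
      _ ≤ C * ‖f‖ * ‖y - x‖ ^ α := by
          refine mul_le_mul_of_nonneg_left ?_ (by positivity)
          refine Real.rpow_le_rpow (norm_nonneg _) ?_ hα.le
          simpa [dist_eq_norm] using ht
  · simp [mem_closedBall, dist_eq_norm]

end DeltaAux

/-- If `ι` is a `C^{m,γ}`-embedding with constant `C`, then the delta map
`δ : ℝⁿ → X*` is of class `C^m`. -/
theorem delta_contDiff {X : Type*} [NormedAddCommGroup X] [NormedSpace ℝ X] [CompleteSpace X]
    {n : ℕ} (hn : 0 < n) {γ C : ℝ} (hγ : 0 < γ) (hγ1 : γ < 1) (hC : 0 ≤ C)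
    (ι : X →ₗ[ℝ] ((Fin n → ℝ) → ℝ)) (m : ℕ)
    (hemb : IsCmGammaEmbedding n ι m γ C)
    (δ : (Fin n → ℝ) → (X →L[ℝ] ℝ))
    (hδ : ∀ (x : Fin n → ℝ) (f : X), δ x f = ι f x) :
    ContDiff ℝ m δ := by
  classical
  open Filter Asymptotics Topology Metric in
  -- the candidate Taylor series
  set p : (Fin n → ℝ) → FormalMultilinearSeries ℝ (Fin n → ℝ) (X →L[ℝ] ℝ) :=
    fun x i => if hi : i ≤ m then deltaP hC hemb i hi x else 0 with hp
  have hp_of_le : ∀ (i : ℕ) (hi : i ≤ m) (x : Fin n → ℝ), p x i = deltaP hC hemb i hi x :=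
    fun i hi x => dif_pos hi
  -- the uniform Hölder continuity bound at order `i ≤ m`, exponent `α`
  have key : ∀ (i : ℕ) (hi : i + 1 ≤ m) (x h : Fin n → ℝ),
      ‖p (x + h) i - p x i - (p x (i + 1)).curryLeft h‖ ≤
        (C * ‖h‖ ^ (if i + 1 = m then γ else (1:ℝ))) * ‖h‖ := by
    intro i hi x h
    have hi' : i ≤ m := by omega
    rw [hp_of_le i hi' (x + h), hp_of_le i hi' x, hp_of_le (i + 1) hi x]
    set α : ℝ := if i + 1 = m then γ else (1:ℝ) with hα_def
    have hα : 0 < α := by rw [hα_def]; split <;> [exact hγ; exact one_pos]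
    refine deltaP_norm_le_of_forall _ (by positivity) fun v f => ?_
    have e1 : ((deltaP hC hemb i hi' (x + h) - deltaP hC hemb i hi' x -
        (deltaP hC hemb (i + 1) hi x).curryLeft h) v) f =
        (iteratedFDeriv ℝ i (ι f) (x + h) - iteratedFDeriv ℝ i (ι f) x -
          fderiv ℝ (iteratedFDeriv ℝ i (ι f)) x h) v := by
      simp only [ContinuousMultilinearMap.sub_apply, ContinuousLinearMap.sub_apply,
        ContinuousMultilinearMap.curryLeft_apply, deltaP_apply]
      rw [iteratedFDeriv_succ_apply_left]
      simp [Fin.tail_cons]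
    rw [e1]
    have h2 := (iteratedFDeriv ℝ i (ι f) (x + h) - iteratedFDeriv ℝ i (ι f) x -
      fderiv ℝ (iteratedFDeriv ℝ i (ι f)) x h).le_opNorm v
    have h3 : (0:ℝ) ≤ ∏ j, ‖v j‖ := Finset.prod_nonneg fun j _ => norm_nonneg _
    have h4 := iter_remainder_bound hC hemb hγ f i hi x (x + h)
    rw [add_sub_cancel_left] at h4
    calc ‖(iteratedFDeriv ℝ i (ι f) (x + h) - iteratedFDeriv ℝ i (ι f) x -
          fderiv ℝ (iteratedFDeriv ℝ i (ι f)) x h) v‖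
        ≤ ‖iteratedFDeriv ℝ i (ι f) (x + h) - iteratedFDeriv ℝ i (ι f) x -
            fderiv ℝ (iteratedFDeriv ℝ i (ι f)) x h‖ * ∏ j, ‖v j‖ := h2
      _ ≤ ((C * ‖f‖ * ‖h‖ ^ α) * ‖h‖) * ∏ j, ‖v j‖ := mul_le_mul_of_nonneg_right h4 h3
      _ = (C * ‖h‖ ^ α) * ‖h‖ * ‖f‖ * ∏ j, ‖v j‖ := by ring
  -- differentiability of `fun y => p y i` for `i < m`
  have hfd : ∀ (i : ℕ), i < m → ∀ x : Fin n → ℝ,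
      HasFDerivAt (fun y => p y i) (p x (i + 1)).curryLeft x := by
    intro i hi x
    refine (hasFDerivAt_iff_isLittleO_nhds_zero (𝕜 := ℝ) (E := Fin n → ℝ)
      (F := ContinuousMultilinearMap ℝ (fun _ : Fin i => (Fin n → ℝ)) (X →L[ℝ] ℝ))).2 ?_
    refine Asymptotics.isLittleO_iff.2 ?_
    intro c hc
    set α : ℝ := if i + 1 = m then γ else (1:ℝ) with hα_def
    have hα : 0 < α := by rw [hα_def]; split <;> [exact hγ; exact one_pos]
    have ht : Filter.Tendsto (fun h : Fin n → ℝ => C * ‖h‖ ^ α) (nhds 0) (nhds 0) := by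
      have t1 : Filter.Tendsto (fun h : Fin n → ℝ => ‖h‖) (nhds 0) (nhds 0) := tendsto_norm_zero
      have t2 : ContinuousAt (fun t : ℝ => t ^ α) 0 :=
        Real.continuousAt_rpow_const 0 α (Or.inr hα.le)
      have t3 := (t2.tendsto.comp t1).const_mul C
      rw [Real.zero_rpow hα.ne', mul_zero] at t3
      exact t3
    filter_upwards [ht.eventually (eventually_lt_nhds hc)] with h hh
    calc ‖p (x + h) i - p x i - (p x (i + 1)).curryLeft h‖
        ≤ (C * ‖h‖ ^ α) * ‖h‖ := key i hi x h
      _ ≤ c * ‖h‖ := mul_le_mul_of_nonneg_right hh.le (norm_nonneg _)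
  have H : HasFTaylorSeriesUpTo ((m : ℕ∞) : WithTop ℕ∞) δ p := by
    constructor
    · intro x
      ext f
      rw [ContinuousMultilinearMap.curry0_apply, hp_of_le 0 (Nat.zero_le m)]
      rw [deltaP_apply, iteratedFDeriv_zero_apply, hδ]
    · intro i hi x
      exact hfd i (by exact_mod_cast hi) x
    · intro i hi
      have hi' : i ≤ m := by exact_mod_cast hi
      rcases lt_or_eq_of_le hi' with h | h
      · exact continuous_iff_continuousAt.2 fun x => (hfd i h x).continuousAt
      · subst h
        refine continuous_iff_continuousAt.2 fun x => ?_
        rw [ContinuousAt, tendsto_iff_norm_sub_tendsto_zero]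
        have hb : ∀ y : Fin n → ℝ, ‖p y i - p x i‖ ≤ C * ‖y - x‖ ^ γ := by
          intro y
          rw [hp_of_le i le_rfl y, hp_of_le i le_rfl x]
          refine deltaP_norm_le_of_forall _ (by positivity) fun v f => ?_
          have e1 : ((deltaP hC hemb i le_rfl y - deltaP hC hemb i le_rfl x) v) f =
              (iteratedFDeriv ℝ i (ι f) y - iteratedFDeriv ℝ i (ι f) x) v := by
            simp [ContinuousMultilinearMap.sub_apply, ContinuousLinearMap.sub_apply]
          rw [e1]
          have h2 := (iteratedFDeriv ℝ i (ι f) y - iteratedFDeriv ℝ i (ι f) x).le_opNorm v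
          have h3 : (0:ℝ) ≤ ∏ j, ‖v j‖ := Finset.prod_nonneg fun j _ => norm_nonneg _
          have h4 := (hemb f).2.2 y x
          calc ‖(iteratedFDeriv ℝ i (ι f) y - iteratedFDeriv ℝ i (ι f) x) v‖
              ≤ ‖iteratedFDeriv ℝ i (ι f) y - iteratedFDeriv ℝ i (ι f) x‖ * ∏ j, ‖v j‖ := h2
            _ ≤ (C * ‖f‖ * ‖y - x‖ ^ γ) * ∏ j, ‖v j‖ := mul_le_mul_of_nonneg_right h4 h3
            _ = C * ‖y - x‖ ^ γ * ‖f‖ * ∏ j, ‖v j‖ := by ring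
        refine squeeze_zero (fun y => norm_nonneg _) hb ?_
        have t1 : Filter.Tendsto (fun y : Fin n → ℝ => ‖y - x‖) (nhds x) (nhds 0) := by
          simpa using (tendsto_iff_norm_sub_tendsto_zero.1 (continuous_id.tendsto x))
        have t2 : ContinuousAt (fun t : ℝ => t ^ γ) 0 :=
          Real.continuousAt_rpow_const 0 γ (Or.inr hγ.le)
        have t3 := (t2.tendsto.comp t1).const_mul C
        rw [Real.zero_rpow hγ.ne', mul_zero] at t3
        exact t3
  have := H.contDiff
  exact_mod_cast this
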